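/- Convergence of natural policy gradient (Lemma B.8). In the finite episodic MDP setting with rewards r_h : 𝒮×𝒜 → [0,1], define for any policy π the Q-functions Q_h^π(s,a) = r_h(s,a) + Σ_{s'} P_h(s'|s,a) V_{h+1}^π(s') and advantages A_h^π(s,a) = Q_h^π(s,a) − V_h^π(s). Fix a learning rate η > 0 and define the NPG iterates: π^{(0)}(·|s,h) uniform on 𝒜 for all s, h, and π^{(t+1)}(a|s,h) = π^{(t)}(a|s,h)·exp(η·A_h^{π^{(t)}}(s,a)) / Σ_{a'} π^{(t)}(a'|s,h)·exp(η·A_h^{π^{(t)}}(s,a')). Then for every T ≥ 1, the iterate π^{(T)} satisfies max_π J(π;r) − J(π^{(T)};r) ≤ H·log A/(η·T) + η·H². -/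

import Mathlib

open Finset

/-- A (non-stationary) policy for a finite episodic MDP. -/
structure EpiPolicy (S A : Type) [Fintype A] where
  p : S → ℕ → A → ℝ
  nonneg : ∀ s h a, 0 ≤ p s h a
  sum_one : ∀ s h, ∑ a, p s h a = 1

/-- `valAux P r π k h s`: value of `π` at state `s` and (0-indexed) step `h` with `k`
steps remaining; the value function at step `h` of a horizon-`H` MDP is
`valAux P r π (H - h) h`, and the return is `∑ s, μ s * valAux P r π H 0 s`. -/
noncomputable def valAux {S A : Type} [Fintype S] [Fintype A]
    (P : ℕ → S → A → S → ℝ) (r : ℕ → S → A → ℝ) (π : EpiPolicy S A) :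
    ℕ → ℕ → S → ℝ
  | 0, _, _ => 0
  | k + 1, h, s =>
      ∑ a, π.p s h a * (r h s a + ∑ s', P h s a s' * valAux P r π k (h + 1) s')

/-- The advantage `A_h^π(s,a) = Q_h^π(s,a) − V_h^π(s)` of policy `π` at (0-indexed)
step `h` in a horizon-`H` MDP. -/
noncomputable def adv {S A : Type} [Fintype S] [Fintype A]
    (H : ℕ) (P : ℕ → S → A → S → ℝ) (r : ℕ → S → A → ℝ) (π : EpiPolicy S A)
    (h : ℕ) (s : S) (a : A) : ℝ :=
  r h s a + (∑ s', P h s a s' * valAux P r π (H - (h + 1)) (h + 1) s') -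
    valAux P r π (H - h) h s

section NPG
variable {S A : Type} [Fintype S] [Fintype A]
variable {H : ℕ} {P : ℕ → S → A → S → ℝ} {r : ℕ → S → A → ℝ} {η : ℝ}

/-- The normalizing constant of the NPG update. -/
noncomputable def npgZ (H : ℕ) (P : ℕ → S → A → S → ℝ) (r : ℕ → S → A → ℝ) (η : ℝ)
    (π : EpiPolicy S A) (s : S) (h : ℕ) : ℝ :=
  ∑ a, π.p s h a * Real.exp (η * adv H P r π h s a)

lemma valAux_succ (π : EpiPolicy S A) (k h : ℕ) (s : S) :
    valAux P r π (k+1) h s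
      = ∑ a, π.p s h a * (r h s a + ∑ s', P h s a s' * valAux P r π k (h + 1) s') := by
  rw [valAux]

lemma valAux_congr {π π' : EpiPolicy S A} (hp : π.p = π'.p) :
    ∀ k h s, valAux P r π k h s = valAux P r π' k h s := by
  intro k
  induction k with
  | zero => intro h s; simp [valAux]
  | succ k ih =>
      intro h s
      simp only [valAux, hp]
      refine Finset.sum_congr rfl fun a _ => ?_
      rw [Finset.sum_congr rfl fun s' _ => by rw [ih (h+1) s']]

lemma valAux_nonneg (hP : ∀ h s a, (∀ s', 0 ≤ P h s a s') ∧ ∑ s', P h s a s' = 1)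
    (hr : ∀ h s a, 0 ≤ r h s a) (π : EpiPolicy S A) :
    ∀ k h s, 0 ≤ valAux P r π k h s := by
  intro k
  induction k with
  | zero => intro h s; simp [valAux]
  | succ k ih =>
      intro h s
      apply Finset.sum_nonneg
      intro a _
      apply mul_nonneg (π.nonneg s h a)
      have h2 : 0 ≤ ∑ s', P h s a s' * valAux P r π k (h+1) s' :=
        Finset.sum_nonneg fun s' _ => mul_nonneg ((hP h s a).1 s') (ih (h+1) s')
      linarith [hr h s a]

lemma valAux_le (hP : ∀ h s a, (∀ s', 0 ≤ P h s a s') ∧ ∑ s', P h s a s' = 1)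
    (hr' : ∀ h s a, r h s a ≤ 1) (π : EpiPolicy S A) :
    ∀ k h s, valAux P r π k h s ≤ k := by
  intro k
  induction k with
  | zero => intro h s; simp [valAux]
  | succ k ih =>
      intro h s
      have step : ∀ a, r h s a + ∑ s', P h s a s' * valAux P r π k (h+1) s' ≤ (k:ℝ) + 1 := by
        intro a
        have h1 : ∑ s', P h s a s' * valAux P r π k (h+1) s' ≤ ∑ s', P h s a s' * (k:ℝ) :=
          Finset.sum_le_sum fun s' _ =>
            mul_le_mul_of_nonneg_left (ih (h+1) s') ((hP h s a).1 s')
        have h2 : ∑ s', P h s a s' * (k:ℝ) = k := by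
          rw [← Finset.sum_mul, (hP h s a).2, one_mul]
        linarith [hr' h s a]
      calc valAux P r π (k+1) h s
          ≤ ∑ a, π.p s h a * ((k:ℝ)+1) := by
            simp only [valAux]
            exact Finset.sum_le_sum fun a _ =>
              mul_le_mul_of_nonneg_left (step a) (π.nonneg s h a)
        _ = ((k:ℝ)+1) := by rw [← Finset.sum_mul, π.sum_one, one_mul]
        _ = ((k+1 : ℕ) : ℝ) := by push_cast; ring


lemma sum_adv_zero (π : EpiPolicy S A) {h k : ℕ} (hk : h + (k+1) = H) (s : S) :
    ∑ a, π.p s h a * adv H P r π h s a = 0 := by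
  have e1 : H - (h+1) = k := by omega
  have e2 : H - h = k + 1 := by omega
  simp only [adv, e1, e2]
  simp only [mul_sub, Finset.sum_sub_distrib, ← Finset.sum_mul, π.sum_one, one_mul]
  rw [valAux_succ]
  ring

lemma npgZ_pos [Nonempty A] {π : EpiPolicy S A} {s : S} {h : ℕ}
    (hp : ∀ a, 0 < π.p s h a) : 0 < npgZ H P r η π s h :=
  Finset.sum_pos (fun a _ => mul_pos (hp a) (Real.exp_pos _)) univ_nonempty

lemma one_le_npgZ (π : EpiPolicy S A) {h k : ℕ} (hk : h + (k+1) = H) (s : S) :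
    1 ≤ npgZ H P r η π s h := by
  have h0 : ∑ a, π.p s h a * (1 + η * adv H P r π h s a) = 1 := by
    have : ∀ a ∈ (univ : Finset A), π.p s h a * (1 + η * adv H P r π h s a)
        = π.p s h a + η * (π.p s h a * adv H P r π h s a) := fun a _ => by ring
    rw [Finset.sum_congr rfl this, Finset.sum_add_distrib, π.sum_one, ← Finset.mul_sum,
      sum_adv_zero π hk s, mul_zero, add_zero]
  calc (1:ℝ) = ∑ a, π.p s h a * (1 + η * adv H P r π h s a) := h0.symm
    _ ≤ npgZ H P r η π s h := by
        refine Finset.sum_le_sum fun a _ => mul_le_mul_of_nonneg_left ?_ (π.nonneg s h a)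
        linarith [Real.add_one_le_exp (η * adv H P r π h s a)]

variable {πseq : ℕ → EpiPolicy S A}

lemma log_pnext [Nonempty A]
    (hrec : ∀ t s h a, (πseq (t + 1)).p s h a =
      (πseq t).p s h a * Real.exp (η * adv H P r (πseq t) h s a) /
        ∑ a', (πseq t).p s h a' * Real.exp (η * adv H P r (πseq t) h s a'))
    (hpos : ∀ t s h a, 0 < (πseq t).p s h a) (t : ℕ) (s : S) (h : ℕ) (a : A) :
    Real.log ((πseq (t+1)).p s h a)
      = Real.log ((πseq t).p s h a) + η * adv H P r (πseq t) h s a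
        - Real.log (npgZ H P r η (πseq t) s h) := by
  have hZ : (0:ℝ) < npgZ H P r η (πseq t) s h := npgZ_pos (hpos t s h)
  rw [hrec t s h a,
    show (∑ a', (πseq t).p s h a' * Real.exp (η * adv H P r (πseq t) h s a'))
        = npgZ H P r η (πseq t) s h from rfl,
    Real.log_div (mul_pos (hpos t s h a) (Real.exp_pos _)).ne' hZ.ne',
    Real.log_mul (hpos t s h a).ne' (Real.exp_pos _).ne', Real.log_exp]

lemma gibbs' (p q : A → ℝ) (hp : ∀ a, 0 < p a) (hq : ∀ a, 0 < q a)
    (hps : ∑ a, p a = 1) (hqs : ∑ a, q a ≤ 1) :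
    0 ≤ ∑ a, p a * (Real.log (p a) - Real.log (q a)) := by
  have key : ∑ a, p a * (Real.log (q a) - Real.log (p a)) ≤ 0 := by
    have h1 : ∀ a ∈ (univ : Finset A), p a * (Real.log (q a) - Real.log (p a)) ≤ q a - p a := by
      intro a _
      have hlog : Real.log (q a / p a) ≤ q a / p a - 1 :=
        Real.log_le_sub_one_of_pos (div_pos (hq a) (hp a))
      rw [Real.log_div (hq a).ne' (hp a).ne'] at hlog
      have := mul_le_mul_of_nonneg_left hlog (hp a).le
      calc p a * (Real.log (q a) - Real.log (p a)) ≤ p a * (q a / p a - 1) := this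
        _ = q a - p a := by field_simp [(hp a).ne']
    calc ∑ a, p a * (Real.log (q a) - Real.log (p a)) ≤ ∑ a, (q a - p a) :=
          Finset.sum_le_sum h1
      _ = (∑ a, q a) - ∑ a, p a := by rw [Finset.sum_sub_distrib]
      _ ≤ 0 := by rw [hps]; linarith
  have h2 : ∑ a, p a * (Real.log (p a) - Real.log (q a))
      = -∑ a, p a * (Real.log (q a) - Real.log (p a)) := by
    rw [← Finset.sum_neg_distrib]
    exact Finset.sum_congr rfl fun a _ => by ring
  rw [h2]; linarith

lemma log_npgZ_le [Nonempty A]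
    (hrec : ∀ t s h a, (πseq (t + 1)).p s h a =
      (πseq t).p s h a * Real.exp (η * adv H P r (πseq t) h s a) /
        ∑ a', (πseq t).p s h a' * Real.exp (η * adv H P r (πseq t) h s a'))
    (hpos : ∀ t s h a, 0 < (πseq t).p s h a) (t : ℕ) (s : S) (h : ℕ) :
    Real.log (npgZ H P r η (πseq t) s h)
      ≤ η * ∑ a, (πseq (t+1)).p s h a * adv H P r (πseq t) h s a := by
  have hg : 0 ≤ ∑ a, (πseq (t+1)).p s h a *
      (Real.log ((πseq (t+1)).p s h a) - Real.log ((πseq t).p s h a)) :=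
    gibbs' _ _ (hpos (t+1) s h) (hpos t s h) ((πseq (t+1)).sum_one s h)
      (le_of_eq ((πseq t).sum_one s h))
  have hmain : η * ∑ a, (πseq (t+1)).p s h a * adv H P r (πseq t) h s a
      = (∑ a, (πseq (t+1)).p s h a *
          (Real.log ((πseq (t+1)).p s h a) - Real.log ((πseq t).p s h a)))
        + Real.log (npgZ H P r η (πseq t) s h) := by
    rw [Finset.mul_sum]
    have : ∀ a ∈ (univ : Finset A), η * ((πseq (t+1)).p s h a * adv H P r (πseq t) h s a)
        = (πseq (t+1)).p s h a *
            (Real.log ((πseq (t+1)).p s h a) - Real.log ((πseq t).p s h a))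
          + (πseq (t+1)).p s h a * Real.log (npgZ H P r η (πseq t) s h) := by
      intro a _
      rw [log_pnext hrec hpos t s h a]
      ring
    rw [Finset.sum_congr rfl this, Finset.sum_add_distrib, ← Finset.sum_mul,
      (πseq (t+1)).sum_one, one_mul]
  linarith

lemma val_succ_ge [Nonempty A]
    (hP : ∀ h s a, (∀ s', 0 ≤ P h s a s') ∧ ∑ s', P h s a s' = 1)
    (hη : 0 < η)
    (hrec : ∀ t s h a, (πseq (t + 1)).p s h a =
      (πseq t).p s h a * Real.exp (η * adv H P r (πseq t) h s a) /
        ∑ a', (πseq t).p s h a' * Real.exp (η * adv H P r (πseq t) h s a'))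
    (hpos : ∀ t s h a, 0 < (πseq t).p s h a)
    (t : ℕ) {k h : ℕ} (hk : h + (k+1) = H) (s : S)
    (hmono : ∀ s', valAux P r (πseq t) k (h+1) s' ≤ valAux P r (πseq (t+1)) k (h+1) s') :
    valAux P r (πseq t) (k+1) h s + Real.log (npgZ H P r η (πseq t) s h) / η
      ≤ valAux P r (πseq (t+1)) (k+1) h s := by
  have e1 : H - (h+1) = k := by omega
  have e2 : H - h = k + 1 := by omega
  have h1 : ∑ a, (πseq (t+1)).p s h a *
        (r h s a + ∑ s', P h s a s' * valAux P r (πseq t) k (h+1) s')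
      ≤ valAux P r (πseq (t+1)) (k+1) h s := by
    rw [valAux_succ]
    refine Finset.sum_le_sum fun a _ => mul_le_mul_of_nonneg_left ?_
      ((πseq (t+1)).nonneg s h a)
    have : ∑ s', P h s a s' * valAux P r (πseq t) k (h+1) s'
        ≤ ∑ s', P h s a s' * valAux P r (πseq (t+1)) k (h+1) s' :=
      Finset.sum_le_sum fun s' _ =>
        mul_le_mul_of_nonneg_left (hmono s') ((hP h s a).1 s')
    linarith
  have h2 : ∑ a, (πseq (t+1)).p s h a *
        (r h s a + ∑ s', P h s a s' * valAux P r (πseq t) k (h+1) s')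
      = valAux P r (πseq t) (k+1) h s
        + ∑ a, (πseq (t+1)).p s h a * adv H P r (πseq t) h s a := by
    simp only [adv, e1, e2]
    simp only [mul_sub, Finset.sum_sub_distrib, ← Finset.sum_mul,
      (πseq (t+1)).sum_one, one_mul]
    ring
  have h3 := log_npgZ_le hrec hpos t s h
  rw [mul_comm] at h3
  have h4 : Real.log (npgZ H P r η (πseq t) s h) / η
      ≤ ∑ a, (πseq (t+1)).p s h a * adv H P r (πseq t) h s a :=
    (div_le_iff₀ hη).2 h3
  linarith

lemma val_mono [Nonempty A]
    (hP : ∀ h s a, (∀ s', 0 ≤ P h s a s') ∧ ∑ s', P h s a s' = 1)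
    (hη : 0 < η)
    (hrec : ∀ t s h a, (πseq (t + 1)).p s h a =
      (πseq t).p s h a * Real.exp (η * adv H P r (πseq t) h s a) /
        ∑ a', (πseq t).p s h a' * Real.exp (η * adv H P r (πseq t) h s a'))
    (hpos : ∀ t s h a, 0 < (πseq t).p s h a) :
    ∀ k h, h + k = H → ∀ t s,
      valAux P r (πseq t) k h s ≤ valAux P r (πseq (t+1)) k h s := by
  intro k
  induction k with
  | zero => intro h _ t s; simp [valAux]
  | succ k ih =>
      intro h hk t s
      have hstep := val_succ_ge hP hη hrec hpos t hk s (fun s' => ih (h+1) (by omega) t s')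
      have hZ : 0 ≤ Real.log (npgZ H P r η (πseq t) s h) :=
        Real.log_nonneg (one_le_npgZ (πseq t) hk s)
      have : 0 ≤ Real.log (npgZ H P r η (πseq t) s h) / η := div_nonneg hZ hη.le
      linarith

lemma sum_log_npgZ_le [Nonempty A]
    (hP : ∀ h s a, (∀ s', 0 ≤ P h s a s') ∧ ∑ s', P h s a s' = 1)
    (hr : ∀ h s a, r h s a ∈ Set.Icc (0:ℝ) 1)
    (hη : 0 < η)
    (hrec : ∀ t s h a, (πseq (t + 1)).p s h a =
      (πseq t).p s h a * Real.exp (η * adv H P r (πseq t) h s a) /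
        ∑ a', (πseq t).p s h a' * Real.exp (η * adv H P r (πseq t) h s a'))
    (hpos : ∀ t s h a, 0 < (πseq t).p s h a)
    (N : ℕ) {k h : ℕ} (hk : h + (k+1) = H) (s : S) :
    ∑ t ∈ Finset.range N, Real.log (npgZ H P r η (πseq t) s h) ≤ η * (k+1) := by
  have htel : ∑ t ∈ Finset.range N, Real.log (npgZ H P r η (πseq t) s h) / η
      ≤ valAux P r (πseq N) (k+1) h s - valAux P r (πseq 0) (k+1) h s := by
    have : ∀ t ∈ Finset.range N, Real.log (npgZ H P r η (πseq t) s h) / η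
        ≤ valAux P r (πseq (t+1)) (k+1) h s - valAux P r (πseq t) (k+1) h s := by
      intro t _
      have := val_succ_ge hP hη hrec hpos t hk s
        (fun s' => val_mono hP hη hrec hpos k (h+1) (by omega) t s')
      linarith
    calc ∑ t ∈ Finset.range N, Real.log (npgZ H P r η (πseq t) s h) / η
        ≤ ∑ t ∈ Finset.range N,
            (valAux P r (πseq (t+1)) (k+1) h s - valAux P r (πseq t) (k+1) h s) :=
          Finset.sum_le_sum this
      _ = valAux P r (πseq N) (k+1) h s - valAux P r (πseq 0) (k+1) h s := by
          rw [Finset.sum_range_sub (fun t => valAux P r (πseq t) (k+1) h s)]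
  have hub : valAux P r (πseq N) (k+1) h s ≤ ((k:ℝ)+1) := by
    have := valAux_le hP (fun h s a => (hr h s a).2) (πseq N) (k+1) h s
    push_cast at this; linarith
  have hlb : 0 ≤ valAux P r (πseq 0) (k+1) h s :=
    valAux_nonneg hP (fun h s a => (hr h s a).1) _ (k+1) h s
  have hsum : (∑ t ∈ Finset.range N, Real.log (npgZ H P r η (πseq t) s h)) / η
      ≤ ((k:ℝ)+1) := by
    rw [Finset.sum_div]
    linarith
  rw [div_le_iff₀ hη] at hsum
  push_cast
  linarith [hsum, mul_comm ((k:ℝ)+1) η]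

lemma p_le_one (ρ : EpiPolicy S A) (s : S) (h : ℕ) (a : A) : ρ.p s h a ≤ 1 := by
  have := Finset.single_le_sum (f := fun a => ρ.p s h a)
    (fun a _ => ρ.nonneg s h a) (Finset.mem_univ a)
  rw [ρ.sum_one s h] at this
  exact this

lemma comparator_regret [Nonempty A]
    (hP : ∀ h s a, (∀ s', 0 ≤ P h s a s') ∧ ∑ s', P h s a s' = 1)
    (hr : ∀ h s a, r h s a ∈ Set.Icc (0:ℝ) 1)
    (hη : 0 < η)
    (hinit : ∀ s h a, (πseq 0).p s h a = 1 / (Fintype.card A : ℝ))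
    (hrec : ∀ t s h a, (πseq (t + 1)).p s h a =
      (πseq t).p s h a * Real.exp (η * adv H P r (πseq t) h s a) /
        ∑ a', (πseq t).p s h a' * Real.exp (η * adv H P r (πseq t) h s a'))
    (hpos : ∀ t s h a, 0 < (πseq t).p s h a)
    (π : EpiPolicy S A) (N : ℕ) {k h : ℕ} (hk : h + (k+1) = H) (s : S) :
    ∑ t ∈ Finset.range N, ∑ a, π.p s h a * adv H P r (πseq t) h s a
      ≤ Real.log (Fintype.card A) / η + ((k:ℝ)+1) := by
  have hid : ∀ t, η * ∑ a, π.p s h a * adv H P r (πseq t) h s a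
      = (∑ a, π.p s h a *
          (Real.log ((πseq (t+1)).p s h a) - Real.log ((πseq t).p s h a)))
        + Real.log (npgZ H P r η (πseq t) s h) := by
    intro t
    rw [Finset.mul_sum]
    have hc : ∀ a ∈ (univ : Finset A), η * (π.p s h a * adv H P r (πseq t) h s a)
        = π.p s h a *
            (Real.log ((πseq (t+1)).p s h a) - Real.log ((πseq t).p s h a))
          + π.p s h a * Real.log (npgZ H P r η (πseq t) s h) := by
      intro a _
      rw [log_pnext hrec hpos t s h a]
      ring
    rw [Finset.sum_congr rfl hc, Finset.sum_add_distrib, ← Finset.sum_mul,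
      π.sum_one, one_mul]
  have hsumid : η * ∑ t ∈ Finset.range N, ∑ a, π.p s h a * adv H P r (πseq t) h s a
      = (∑ a, π.p s h a *
          (Real.log ((πseq N).p s h a) - Real.log ((πseq 0).p s h a)))
        + ∑ t ∈ Finset.range N, Real.log (npgZ H P r η (πseq t) s h) := by
    rw [Finset.mul_sum, Finset.sum_congr rfl (fun t _ => hid t), Finset.sum_add_distrib]
    congr 1
    rw [Finset.sum_comm]
    refine Finset.sum_congr rfl fun a _ => ?_
    rw [← Finset.mul_sum,
      Finset.sum_range_sub (fun t => Real.log ((πseq t).p s h a))]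
  have hbound : ∑ a, π.p s h a *
      (Real.log ((πseq N).p s h a) - Real.log ((πseq 0).p s h a))
      ≤ Real.log (Fintype.card A) := by
    have step : ∀ a ∈ (univ : Finset A), π.p s h a *
        (Real.log ((πseq N).p s h a) - Real.log ((πseq 0).p s h a))
        ≤ π.p s h a * Real.log (Fintype.card A) := by
      intro a _
      refine mul_le_mul_of_nonneg_left ?_ (π.nonneg s h a)
      have h1 : Real.log ((πseq N).p s h a) ≤ 0 :=
        Real.log_nonpos (hpos N s h a).le (p_le_one _ s h a)
      have h2 : Real.log ((πseq 0).p s h a) = - Real.log (Fintype.card A) := by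
        rw [hinit s h a, one_div, Real.log_inv]
      rw [h2]; linarith
    calc ∑ a, π.p s h a *
        (Real.log ((πseq N).p s h a) - Real.log ((πseq 0).p s h a))
        ≤ ∑ a, π.p s h a * Real.log (Fintype.card A) := Finset.sum_le_sum step
      _ = Real.log (Fintype.card A) := by rw [← Finset.sum_mul, π.sum_one, one_mul]
  have hZsum := sum_log_npgZ_le hP hr hη hrec hpos N hk s
  have hmul : η * ∑ t ∈ Finset.range N, ∑ a, π.p s h a * adv H P r (πseq t) h s a
      ≤ Real.log (Fintype.card A) + η * ((k:ℝ)+1) := by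
    rw [hsumid]
    push_cast at hZsum
    linarith
  rw [← mul_le_mul_iff_right₀ hη]
  have : η * (Real.log (Fintype.card A) / η + ((k:ℝ)+1))
      = Real.log (Fintype.card A) + η * ((k:ℝ)+1) := by field_simp
  rw [this]
  exact hmul

lemma regret_decomp [Nonempty A]
    (hP : ∀ h s a, (∀ s', 0 ≤ P h s a s') ∧ ∑ s', P h s a s' = 1)
    (hr : ∀ h s a, r h s a ∈ Set.Icc (0:ℝ) 1)
    (hη : 0 < η)
    (hinit : ∀ s h a, (πseq 0).p s h a = 1 / (Fintype.card A : ℝ))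
    (hrec : ∀ t s h a, (πseq (t + 1)).p s h a =
      (πseq t).p s h a * Real.exp (η * adv H P r (πseq t) h s a) /
        ∑ a', (πseq t).p s h a' * Real.exp (η * adv H P r (πseq t) h s a'))
    (hpos : ∀ t s h a, 0 < (πseq t).p s h a)
    (π : EpiPolicy S A) (N : ℕ) :
    ∀ k h, h + k = H → ∀ s,
      ∑ t ∈ Finset.range N, (valAux P r π k h s - valAux P r (πseq t) k h s)
        ≤ (k:ℝ) * (Real.log (Fintype.card A) / η) + (k:ℝ)*((k:ℝ)+1)/2 := by
  intro k
  induction k with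
  | zero => intro h _ s; simp [valAux]
  | succ k ih =>
      intro h hk s
      have e1 : H - (h+1) = k := by omega
      have e2 : H - h = k + 1 := by omega
      have hid : ∀ t ∈ Finset.range N,
          valAux P r π (k+1) h s - valAux P r (πseq t) (k+1) h s
          = (∑ a, π.p s h a * adv H P r (πseq t) h s a)
            + ∑ a, π.p s h a * ∑ s', P h s a s' *
                (valAux P r π k (h+1) s' - valAux P r (πseq t) k (h+1) s') := by
        intro t _
        have hW : ∀ a, adv H P r (πseq t) h s a
            + ∑ s', P h s a s' *
                (valAux P r π k (h+1) s' - valAux P r (πseq t) k (h+1) s')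
            = (r h s a + ∑ s', P h s a s' * valAux P r π k (h+1) s')
              - valAux P r (πseq t) (k+1) h s := by
          intro a
          simp only [adv, e1, e2, mul_sub, Finset.sum_sub_distrib]
          ring
        have hsum : (∑ a, π.p s h a * adv H P r (πseq t) h s a)
            + ∑ a, π.p s h a * ∑ s', P h s a s' *
                (valAux P r π k (h+1) s' - valAux P r (πseq t) k (h+1) s')
            = ∑ a, π.p s h a *
                ((r h s a + ∑ s', P h s a s' * valAux P r π k (h+1) s')
                  - valAux P r (πseq t) (k+1) h s) := by
          rw [← Finset.sum_add_distrib]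
          refine Finset.sum_congr rfl fun a _ => ?_
          rw [← mul_add, hW a]
        rw [hsum, valAux_succ π k h s]
        simp only [mul_sub, Finset.sum_sub_distrib, ← Finset.sum_mul, π.sum_one, one_mul]
      have hcomp := comparator_regret hP hr hη hinit hrec hpos π N hk s
      have hsec : ∑ t ∈ Finset.range N, ∑ a, π.p s h a * ∑ s', P h s a s' *
            (valAux P r π k (h+1) s' - valAux P r (πseq t) k (h+1) s')
          ≤ (k:ℝ) * (Real.log (Fintype.card A) / η) + (k:ℝ)*((k:ℝ)+1)/2 := by
        rw [Finset.sum_comm]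
        calc ∑ a, ∑ t ∈ Finset.range N, π.p s h a * ∑ s', P h s a s' *
              (valAux P r π k (h+1) s' - valAux P r (πseq t) k (h+1) s')
            = ∑ a, π.p s h a * ∑ s', P h s a s' *
              (∑ t ∈ Finset.range N,
                (valAux P r π k (h+1) s' - valAux P r (πseq t) k (h+1) s')) := by
              refine Finset.sum_congr rfl fun a _ => ?_
              rw [← Finset.mul_sum]
              congr 1
              rw [Finset.sum_comm]
              exact Finset.sum_congr rfl fun s' _ => (Finset.mul_sum _ _ _).symm
          _ ≤ ∑ a, π.p s h a *
                ((k:ℝ) * (Real.log (Fintype.card A) / η) + (k:ℝ)*((k:ℝ)+1)/2) := by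
              refine Finset.sum_le_sum fun a _ =>
                mul_le_mul_of_nonneg_left ?_ (π.nonneg s h a)
              calc ∑ s', P h s a s' *
                    (∑ t ∈ Finset.range N,
                      (valAux P r π k (h+1) s' - valAux P r (πseq t) k (h+1) s'))
                  ≤ ∑ s', P h s a s' *
                      ((k:ℝ) * (Real.log (Fintype.card A) / η) + (k:ℝ)*((k:ℝ)+1)/2) :=
                    Finset.sum_le_sum fun s' _ =>
                      mul_le_mul_of_nonneg_left (ih (h+1) (by omega) s')
                        ((hP h s a).1 s')
                _ = (k:ℝ) * (Real.log (Fintype.card A) / η) + (k:ℝ)*((k:ℝ)+1)/2 := by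
                    rw [← Finset.sum_mul, (hP h s a).2, one_mul]
          _ = (k:ℝ) * (Real.log (Fintype.card A) / η) + (k:ℝ)*((k:ℝ)+1)/2 := by
              rw [← Finset.sum_mul, π.sum_one, one_mul]
      calc ∑ t ∈ Finset.range N,
            (valAux P r π (k+1) h s - valAux P r (πseq t) (k+1) h s)
          = (∑ t ∈ Finset.range N, ∑ a, π.p s h a * adv H P r (πseq t) h s a)
            + ∑ t ∈ Finset.range N, ∑ a, π.p s h a * ∑ s', P h s a s' *
                (valAux P r π k (h+1) s' - valAux P r (πseq t) k (h+1) s') := by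
            rw [← Finset.sum_add_distrib]
            exact Finset.sum_congr rfl hid
        _ ≤ (Real.log (Fintype.card A) / η + ((k:ℝ)+1))
            + ((k:ℝ) * (Real.log (Fintype.card A) / η) + (k:ℝ)*((k:ℝ)+1)/2) :=
            add_le_add hcomp hsec
        _ = ((k+1 : ℕ):ℝ) * (Real.log (Fintype.card A) / η)
            + ((k+1 : ℕ):ℝ)*(((k+1 : ℕ):ℝ)+1)/2 := by push_cast; ring

end NPG

lemma npg_arith {L η Hr Tr X : ℝ} (hL : 1/2 ≤ L) (hη : 0 < η) (hH : 1 ≤ Hr) (hT : 1 ≤ Tr)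
    (hX1 : X ≤ Hr) (hX2 : X ≤ (Hr*(L/η) + Hr*(Hr+1)/2)/(Tr+1)) :
    X ≤ Hr * L / (η * Tr) + η * Hr^2 := by
  have hTpos : (0:ℝ) < η * Tr := by positivity
  have hT1 : (0:ℝ) < Tr + 1 := by linarith
  by_cases hcase : Hr + 1 ≤ 2*Hr*η*Tr
  · have h1 : Hr*(L/η)/(Tr+1) ≤ Hr*L/(η*Tr) := by
      rw [div_le_div_iff₀ hT1 hTpos]
      have : Hr*(L/η)*(η*Tr) = Hr*L*Tr := by field_simp
      rw [this]
      have hLpos : 0 ≤ Hr * L := by nlinarith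
      nlinarith
    have h2 : Hr*(Hr+1)/2/(Tr+1) ≤ η*Hr^2 := by
      rw [div_le_iff₀ hT1]
      nlinarith
    have key : (Hr*(L/η) + Hr*(Hr+1)/2)/(Tr+1) ≤ Hr*L/(η*Tr) + η*Hr^2 := by
      rw [add_div]
      exact add_le_add h1 h2
    linarith
  · push_neg at hcase
    by_cases hc2 : η*Tr ≤ L
    · have h1 : Hr ≤ Hr*L/(η*Tr) := by
        rw [le_div_iff₀ hTpos]
        nlinarith
      have h2 : 0 ≤ η*Hr^2 := by positivity
      linarith
    · push_neg at hc2
      have hmm : η*Tr ≤ 1 := by nlinarith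
      have ha : Hr/2 ≤ η*Hr*Tr := by nlinarith
      have hb : 1/2 ≤ L/(η*Tr) := by
        rw [le_div_iff₀ hTpos]
        nlinarith
      have hkey : (Hr+1)/2 ≤ η*Hr*(Tr+1) + L/(η*Tr) := by nlinarith
      have key : (Hr*(L/η) + Hr*(Hr+1)/2)/(Tr+1) ≤ Hr*L/(η*Tr) + η*Hr^2 := by
        rw [div_le_iff₀ hT1]
        have e : Hr*L/(η*Tr)*(Tr+1) = Hr*(L/η) + Hr*(L/(η*Tr)) := by
          field_simp
        have h3 := mul_le_mul_of_nonneg_left hkey (by linarith : (0:ℝ) ≤ Hr)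
        have e3 : Hr*(η*Hr*(Tr+1)) = η*Hr^2*(Tr+1) := by ring
        have e4 : Hr * ((Hr+1)/2) = Hr*(Hr+1)/2 := by ring
        have e5 : Hr * (η*Hr*(Tr+1) + L/(η*Tr)) = η*Hr^2*(Tr+1) + Hr*(L/(η*Tr)) := by ring
        rw [e4, e5] at h3
        nlinarith [h3, e]
      linarith

/-- **Convergence of natural policy gradient (Lemma B.8).**
Starting from the uniform policy and performing the NPG (softmax advantage) update
with learning rate `η > 0`, after `T ≥ 1` iterations:
`max_π J(π;r) − J(π^{(T)};r) ≤ H·log A/(η·T) + η·H²`. -/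
theorem npg_convergence
    (S A : Type) [Fintype S] [Fintype A]
    (H : ℕ) (P : ℕ → S → A → S → ℝ) (μ : S → ℝ)
    (hP : ∀ h s a, (∀ s', 0 ≤ P h s a s') ∧ ∑ s', P h s a s' = 1)
    (hμ : (∀ s, 0 ≤ μ s) ∧ ∑ s, μ s = 1)
    (r : ℕ → S → A → ℝ) (hr : ∀ h s a, r h s a ∈ Set.Icc (0 : ℝ) 1)
    (η : ℝ) (hη : 0 < η) (T : ℕ) (hT : 1 ≤ T)
    (πseq : ℕ → EpiPolicy S A)
    (hinit : ∀ s h a, (πseq 0).p s h a = 1 / (Fintype.card A : ℝ))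
    (hrec : ∀ t s h a, (πseq (t + 1)).p s h a =
      (πseq t).p s h a * Real.exp (η * adv H P r (πseq t) h s a) /
        ∑ a', (πseq t).p s h a' * Real.exp (η * adv H P r (πseq t) h s a')) :
    ∀ π : EpiPolicy S A,
      (∑ s, μ s * valAux P r π H 0 s) - (∑ s, μ s * valAux P r (πseq T) H 0 s) ≤
        H * Real.log (Fintype.card A) / (η * T) + η * H ^ 2 := by
  intro π
  have hL0 : 0 ≤ Real.log (Fintype.card A) := by
    rcases Nat.eq_zero_or_pos (Fintype.card A) with h0 | h0
    · simp [h0]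
    · exact Real.log_nonneg (by exact_mod_cast h0)
  have hTpos : (0:ℝ) < (T:ℝ) := by exact_mod_cast hT
  have hRHS : 0 ≤ (H:ℝ) * Real.log (Fintype.card A) / (η * T) + η * H ^ 2 := by
    have h1 : 0 ≤ (H:ℝ) * Real.log (Fintype.card A) / (η * T) := by positivity
    positivity
  by_cases hS : IsEmpty S
  · have he : (Finset.univ : Finset S) = ∅ := Finset.univ_eq_empty
    rw [he]
    simpa using hRHS
  haveI : Nonempty S := not_isEmpty_iff.mp hS
  have hcardA : 0 < Fintype.card A := by
    by_contra hc
    have hc0 : Fintype.card A = 0 := by omega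
    haveI := Fintype.card_eq_zero_iff.mp hc0
    obtain ⟨s₀⟩ := (inferInstance : Nonempty S)
    have h1 := π.sum_one s₀ 0
    rw [Finset.univ_eq_empty, Finset.sum_empty] at h1
    exact zero_ne_one h1
  haveI : Nonempty A := Fintype.card_pos_iff.mp hcardA
  by_cases hA1 : Fintype.card A = 1
  · have hsub : ∀ (ρ : EpiPolicy S A) s h a, ρ.p s h a = 1 := by
      intro ρ s h a
      haveI : Subsingleton A := Fintype.card_le_one_iff_subsingleton.mp (le_of_eq hA1)
      have h1 := ρ.sum_one s h
      rw [Finset.sum_eq_single_of_mem a (Finset.mem_univ a)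
        (fun b _ hb => absurd (Subsingleton.elim b a) hb)] at h1
      exact h1
    have hpp : π.p = (πseq T).p := by
      funext s h a; rw [hsub π, hsub (πseq T)]
    have hLHS : (∑ s, μ s * valAux P r π H 0 s)
        = ∑ s, μ s * valAux P r (πseq T) H 0 s :=
      Finset.sum_congr rfl fun s _ => by rw [valAux_congr hpp H 0 s]
    rw [hLHS, sub_self]
    exact hRHS
  by_cases hH0 : H = 0
  · subst hH0
    simp only [valAux, Nat.cast_zero]
    simpa using hRHS
  -- main case
  have hpos : ∀ t s h a, 0 < (πseq t).p s h a := by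
    intro t
    induction t with
    | zero =>
        intro s h a
        rw [hinit]
        exact div_pos one_pos (by exact_mod_cast hcardA)
    | succ t ih =>
        intro s h a
        rw [hrec]
        exact div_pos (mul_pos (ih s h a) (Real.exp_pos _))
          (Finset.sum_pos (fun a' _ => mul_pos (ih s h a') (Real.exp_pos _))
            Finset.univ_nonempty)
  have hH1 : 1 ≤ H := Nat.one_le_iff_ne_zero.mpr hH0
  have hA2 : 2 ≤ Fintype.card A := by omega
  have hL : 1/2 ≤ Real.log (Fintype.card A) := by
    have h1 : Real.log 2 ≤ Real.log (Fintype.card A) := by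
      apply Real.log_le_log (by norm_num)
      exact_mod_cast hA2
    have h2 : (0.6931471803 : ℝ) < Real.log 2 := Real.log_two_gt_d9
    linarith
  have hμ1 := hμ.1
  have hμ2 := hμ.2
  -- regret summed over iterations, weighted by μ
  have hJreg : ∑ t ∈ Finset.range (T+1),
      ((∑ s, μ s * valAux P r π H 0 s) - (∑ s, μ s * valAux P r (πseq t) H 0 s))
      ≤ (H:ℝ) * (Real.log (Fintype.card A) / η) + (H:ℝ)*((H:ℝ)+1)/2 := by
    have hper : ∀ s, ∑ t ∈ Finset.range (T+1),
        (valAux P r π H 0 s - valAux P r (πseq t) H 0 s)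
        ≤ (H:ℝ) * (Real.log (Fintype.card A) / η) + (H:ℝ)*((H:ℝ)+1)/2 :=
      fun s => regret_decomp hP hr hη hinit hrec hpos π (T+1) H 0 (by omega) s
    calc ∑ t ∈ Finset.range (T+1),
        ((∑ s, μ s * valAux P r π H 0 s) - (∑ s, μ s * valAux P r (πseq t) H 0 s))
        = ∑ s, μ s * (∑ t ∈ Finset.range (T+1),
            (valAux P r π H 0 s - valAux P r (πseq t) H 0 s)) := by
          have h1 : ∀ t ∈ Finset.range (T+1),
              (∑ s, μ s * valAux P r π H 0 s) - (∑ s, μ s * valAux P r (πseq t) H 0 s)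
              = ∑ s, μ s * (valAux P r π H 0 s - valAux P r (πseq t) H 0 s) := by
            intro t _
            rw [← Finset.sum_sub_distrib]
            exact Finset.sum_congr rfl fun s _ => (mul_sub _ _ _).symm
          rw [Finset.sum_congr rfl h1, Finset.sum_comm]
          exact Finset.sum_congr rfl fun s _ => (Finset.mul_sum _ _ _).symm
      _ ≤ ∑ s, μ s * ((H:ℝ) * (Real.log (Fintype.card A) / η) + (H:ℝ)*((H:ℝ)+1)/2) :=
          Finset.sum_le_sum fun s _ => mul_le_mul_of_nonneg_left (hper s) (hμ1 s)
      _ = (H:ℝ) * (Real.log (Fintype.card A) / η) + (H:ℝ)*((H:ℝ)+1)/2 := by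
          rw [← Finset.sum_mul, hμ2, one_mul]
  -- monotone improvement of the return
  have hstep : ∀ u, (∑ s, μ s * valAux P r (πseq u) H 0 s)
      ≤ ∑ s, μ s * valAux P r (πseq (u+1)) H 0 s := fun u =>
    Finset.sum_le_sum fun s _ => mul_le_mul_of_nonneg_left
      (val_mono hP hη hrec hpos H 0 (by omega) u s) (hμ1 s)
  have hmonoJ : ∀ t, t ≤ T → (∑ s, μ s * valAux P r (πseq t) H 0 s)
      ≤ ∑ s, μ s * valAux P r (πseq T) H 0 s := fun t ht =>
    (monotone_nat_of_le_succ hstep) ht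
  have hXT : ((T:ℝ)+1) * ((∑ s, μ s * valAux P r π H 0 s)
        - (∑ s, μ s * valAux P r (πseq T) H 0 s))
      ≤ ∑ t ∈ Finset.range (T+1),
        ((∑ s, μ s * valAux P r π H 0 s) - (∑ s, μ s * valAux P r (πseq t) H 0 s)) := by
    have h1 : ∀ t ∈ Finset.range (T+1),
        (∑ s, μ s * valAux P r π H 0 s) - (∑ s, μ s * valAux P r (πseq T) H 0 s)
        ≤ (∑ s, μ s * valAux P r π H 0 s) - (∑ s, μ s * valAux P r (πseq t) H 0 s) := by
      intro t ht
      have := hmonoJ t (by simp at ht; omega : t ≤ T)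
      linarith
    calc ((T:ℝ)+1) * ((∑ s, μ s * valAux P r π H 0 s)
          - (∑ s, μ s * valAux P r (πseq T) H 0 s))
        = ∑ _t ∈ Finset.range (T+1), ((∑ s, μ s * valAux P r π H 0 s)
          - (∑ s, μ s * valAux P r (πseq T) H 0 s)) := by
          rw [Finset.sum_const, Finset.card_range, nsmul_eq_mul]
          push_cast; ring
      _ ≤ _ := Finset.sum_le_sum h1
  have hX2 : (∑ s, μ s * valAux P r π H 0 s) - (∑ s, μ s * valAux P r (πseq T) H 0 s)
      ≤ ((H:ℝ) * (Real.log (Fintype.card A) / η) + (H:ℝ)*((H:ℝ)+1)/2) / ((T:ℝ)+1) := by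
    rw [le_div_iff₀ (by linarith : (0:ℝ) < (T:ℝ)+1)]
    calc ((∑ s, μ s * valAux P r π H 0 s) - (∑ s, μ s * valAux P r (πseq T) H 0 s))
          * ((T:ℝ)+1)
        = ((T:ℝ)+1) * ((∑ s, μ s * valAux P r π H 0 s)
          - (∑ s, μ s * valAux P r (πseq T) H 0 s)) := by ring
      _ ≤ _ := le_trans hXT hJreg
  have hX1 : (∑ s, μ s * valAux P r π H 0 s) - (∑ s, μ s * valAux P r (πseq T) H 0 s)
      ≤ (H:ℝ) := by
    have h1 : (∑ s, μ s * valAux P r π H 0 s) ≤ (H:ℝ) := by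
      calc (∑ s, μ s * valAux P r π H 0 s) ≤ ∑ s, μ s * (H:ℝ) :=
            Finset.sum_le_sum fun s _ => mul_le_mul_of_nonneg_left
              (valAux_le hP (fun h s a => (hr h s a).2) π H 0 s) (hμ1 s)
        _ = (H:ℝ) := by rw [← Finset.sum_mul, hμ2, one_mul]
    have h2 : 0 ≤ ∑ s, μ s * valAux P r (πseq T) H 0 s :=
      Finset.sum_nonneg fun s _ => mul_nonneg (hμ1 s)
        (valAux_nonneg hP (fun h s a => (hr h s a).1) _ H 0 s)
    linarith
  exact npg_arith hL hη (by exact_mod_cast hH1) (by exact_mod_cast hT) hX1 hX2
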